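/- arXiv:2409.06988 — 4 statements merged into one kernel-verified Lean document; each statement's English description precedes it below -/
import Mathlib

section
/- Let z be a complex number with arg(z) ∈ [0,π/2] ∪ [π,3π/2] and |Re z| > L > 0, and let x, y be real with |x| < L − δ for some δ > 0 and y ∈ ℝ. Then |√((z−x)² + y²)| > √(2(√2 − 1)) · δ. -/
open Complex

/-- `z` lies in the closed first or third quadrant, i.e.
`arg z ∈ [0, π/2] ∪ [π, 3π/2]`. -/
def InClosedFirstOrThirdQuadrant (z : ℂ) : Prop :=
  (0 ≤ z.re ∧ 0 ≤ z.im) ∨ (z.re ≤ 0 ∧ z.im ≤ 0)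

theorem sqrt_abs_lower_bound_delta
    (L δ : ℝ) (hL : 0 < L) (hδ : 0 < δ) (z : ℂ)
    (hquad : InClosedFirstOrThirdQuadrant z)
    (hre : L < |z.re|)
    (x y : ℝ) (hx : |x| < L - δ) :
    ‖((z - (x : ℂ)) ^ 2 + (y : ℂ) ^ 2) ^ ((1 : ℂ) / 2)‖ >
      Real.sqrt (2 * (Real.sqrt 2 - 1)) * δ := by
  set w : ℂ := z - (x : ℂ) with hw
  have hwre' : w.re = z.re - x := by simp [hw]
  have hwre : δ < |w.re| := by
    have h1 := abs_sub_abs_le_abs_sub z.re x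
    rw [hwre']; linarith
  have hr : δ ^ 2 < w.re ^ 2 := by
    nlinarith [abs_nonneg w.re, _root_.sq_abs w.re]
  set u : ℂ := w ^ 2 + (y : ℂ) ^ 2 with hu
  have hure : u.re = w.re ^ 2 - w.im ^ 2 + y ^ 2 := by
    simp [hu, pow_two, Complex.mul_re]
  have huim : u.im = 2 * w.re * w.im := by
    simp [hu, pow_two, Complex.mul_im]; ring
  have hwre0 : w.re ≠ 0 := by
    intro h; rw [h] at hwre; simp at hwre; linarith
  have hu0 : u ≠ 0 := by
    intro h
    have h1 : u.im = 0 := by rw [h]; simp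
    have h2 : u.re = 0 := by rw [h]; simp
    rw [huim] at h1
    have hwim : w.im = 0 := by
      rcases mul_eq_zero.mp h1 with h' | h'
      · rcases mul_eq_zero.mp h' with h'' | h''
        · norm_num at h''
        · exact absurd h'' hwre0
      · exact h'
    rw [hure, hwim] at h2
    nlinarith [sq_nonneg y, sq_nonneg w.re, pow_pos (abs_pos.mpr hwre0) 2]
  have hnormSq : δ ^ 4 < Complex.normSq u := by
    rw [Complex.normSq_apply, hure, huim]
    nlinarith [sq_nonneg (w.im ^ 2 - y ^ 2), sq_nonneg (w.re * w.im),
      sq_nonneg (w.re * y), sq_nonneg δ, sq_nonneg w.re]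
  have habsu : δ ^ 2 < ‖u‖ := by
    rw [Complex.norm_def]
    rw [show (δ:ℝ)^4 = (δ^2)^2 by ring] at hnormSq
    exact (Real.lt_sqrt (sq_nonneg δ)).mpr hnormSq
  have hcpow : ‖u ^ ((1 : ℂ) / 2)‖ = Real.sqrt ‖u‖ := by
    rw [Complex.norm_cpow_of_ne_zero hu0]
    simp [Real.sqrt_eq_rpow]
  rw [hcpow]
  have h1 : δ < Real.sqrt ‖u‖ := by
    have := Real.sqrt_lt_sqrt (sq_nonneg δ) habsu
    rwa [Real.sqrt_sq hδ.le] at this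
  have hc : Real.sqrt (2 * (Real.sqrt 2 - 1)) < 1 := by
    have h2 : Real.sqrt 2 < 3 / 2 := by
      nlinarith [Real.sq_sqrt (by norm_num : (0:ℝ) ≤ 2), Real.sqrt_nonneg 2]
    have : 2 * (Real.sqrt 2 - 1) < 1 := by linarith
    calc Real.sqrt (2 * (Real.sqrt 2 - 1)) < Real.sqrt 1 := by
          apply Real.sqrt_lt_sqrt ?_ this
          nlinarith [Real.sqrt_nonneg 2, Real.sq_sqrt (by norm_num : (0:ℝ) ≤ 2)]
      _ = 1 := Real.sqrt_one
  nlinarith [Real.sqrt_nonneg ‖u‖]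
end

section
/- Let k > 0 and define, for z ∈ ℂ in the closed first quadrant with Re z > L > 0 and y = (y₁, y₂) ∈ ℝ² with |y₁| ≤ L − δ, |y₂| ≤ H, the complexified distance r(z,y) = √((z − y₁)² + y₂²) (principal branch). Then there exists a constant C depending only on L, δ, H, k such that whenever |z − L| ≥ 2H: e^{−k·Im r(z,y)} ≤ C · e^{−k·Im z}. -/
set_option maxHeartbeats 1000000


open Complex

noncomputable section

/-- The complexified distance `r(z, y) = √((z - y₁)² + y₂²)` (principal branch). -/
def complexDist (z : ℂ) (y₁ y₂ : ℝ) : ℂ :=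
  ((z - (y₁ : ℂ)) ^ 2 + (y₂ : ℂ) ^ 2) ^ ((1 : ℂ) / 2)

lemma sqrt_re_im_nonneg {u : ℂ} (hu : 0 ≤ u.im) :
    0 ≤ (u ^ ((1 : ℂ) / 2)).re ∧ 0 ≤ (u ^ ((1 : ℂ) / 2)).im := by
  rcases eq_or_ne u 0 with h | h
  · subst h
    rw [Complex.zero_cpow (by norm_num)]
    simp
  · rw [Complex.cpow_def_of_ne_zero h]
    have harg1 : 0 ≤ u.arg := Complex.arg_nonneg_iff.2 hu
    have harg2 : u.arg ≤ Real.pi := Complex.arg_le_pi u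
    have him : (Complex.log u * (1 / 2)).im = u.arg / 2 := by
      simp [Complex.mul_im, Complex.log_im]
      ring
    constructor
    · rw [Complex.exp_re, him]
      apply mul_nonneg (Real.exp_nonneg _)
      apply Real.cos_nonneg_of_mem_Icc
      constructor <;> [linarith [Real.pi_pos]; linarith]
    · rw [Complex.exp_im, him]
      apply mul_nonneg (Real.exp_nonneg _)
      apply Real.sin_nonneg_of_nonneg_of_le_pi <;> linarith [Real.pi_pos]

theorem exp_neg_im_complexDist_bound
    (k L δ H : ℝ) (hk : 0 < k) (hL : 0 < L) (hδ : 0 < δ) (hH : 0 < H) :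
    ∃ C : ℝ, 0 < C ∧ ∀ (z : ℂ) (y₁ y₂ : ℝ),
      L < z.re → 0 ≤ z.im → |y₁| ≤ L - δ → |y₂| ≤ H →
      2 * H ≤ ‖z - (L : ℂ)‖ →
      Real.exp (-k * (complexDist z y₁ y₂).im) ≤ C * Real.exp (-k * z.im) := by
  refine ⟨Real.exp (k * H), Real.exp_pos _, ?_⟩
  intro z y₁ y₂ hre him hy1 hy2 _
  set u : ℂ := (z - (y₁ : ℂ)) ^ 2 + (y₂ : ℂ) ^ 2 with hu
  set c : ℝ := z.re - y₁ with hc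
  set d : ℝ := z.im with hd
  have hcpos : 0 < c := by
    have : y₁ ≤ L - δ := (abs_le.1 hy1).2
    simp only [hc]; linarith
  have hure : u.re = c ^ 2 - d ^ 2 + y₂ ^ 2 := by
    simp [hu, hc, hd, pow_two, Complex.mul_re, Complex.sub_re, Complex.sub_im]
    try ring
  have huim : u.im = 2 * c * d := by
    simp [hu, hc, hd, pow_two, Complex.mul_im, Complex.sub_re, Complex.sub_im]
    ring
  have huim0 : 0 ≤ u.im := by rw [huim]; positivity
  set r : ℂ := u ^ ((1 : ℂ) / 2) with hr
  obtain ⟨ha, hb⟩ := sqrt_re_im_nonneg huim0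
  set a : ℝ := r.re with hA
  set b : ℝ := r.im with hB
  have hsq : r ^ 2 = u := by
    have := Complex.cpow_nat_inv_pow u (n := 2) (by norm_num)
    rw [hr]; norm_num at this ⊢; exact this
  have hre2 : a ^ 2 - b ^ 2 = c ^ 2 - d ^ 2 + y₂ ^ 2 := by
    have := congrArg Complex.re hsq
    simp [pow_two, Complex.mul_re, ← hA, ← hB] at this
    nlinarith [this, hure]
  have him2 : a * b = c * d := by
    have := congrArg Complex.im hsq
    simp [pow_two, Complex.mul_im, ← hA, ← hB] at this
    rw [huim] at this
    linarith
  have hcd : (complexDist z y₁ y₂).im = b := rfl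
  clear_value b a r u c d
  -- key inequality: d ≤ b + H
  have key : d ≤ b + H := by
    rcases le_or_gt d H with h | h
    · linarith
    · -- d > H > 0
      have hd0 : 0 < d := lt_trans hH h
      have hb0 : 0 < b := by
        rcases lt_or_eq_of_le hb with h' | h'
        · exact h'
        · exfalso; nlinarith [him2]
      by_contra hcon
      push_neg at hcon
      have hac : c < a := by
        have : a = c * d / b := by field_simp at him2 ⊢; linarith
        rw [this]
        rw [lt_div_iff₀ hb0]
        nlinarith
      have ht : y₂ ^ 2 ≤ H ^ 2 :=
        sq_le_sq' (by linarith [(abs_le.1 hy2).1]) (abs_le.1 hy2).2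
      have h1 : H ^ 2 < (d - b) * (d + b) := by nlinarith
      have h2 : c ^ 2 < a ^ 2 := by nlinarith
      nlinarith [h1, h2]
  have hgoal : -k * b ≤ k * H + -k * d := by nlinarith
  calc Real.exp (-k * (complexDist z y₁ y₂).im) = Real.exp (-k * b) := by rw [hcd]
    _ ≤ Real.exp (k * H + -k * d) := Real.exp_le_exp.2 hgoal
    _ = Real.exp (k * H) * Real.exp (-k * d) := Real.exp_add _ _

end
end

section
/- Let g : S → ℂ be defined on S = {(z, y) : z ∈ ℂ in the closed first quadrant with Re z > L, y = (y₁,y₂) ∈ ℝ², |y₁| ≤ L−δ, |y₂| ≤ H} by g(z,y) = −(i k / 2) · H₁⁽¹⁾(k r(z,y)) · ((z − y₁, −y₂)·n(y)) / r(z,y), where r(z,y) = √((z−y₁)² + y₂²) (principal branch) and n(y) is a unit vector. Then there exists a constant C₁ = C₁(L, δ, H, k) > 0 such that |g(z,y)| ≤ C₁ · e^{−k|Im z|} / √(1 + |z|) for all (z,y) ∈ S. -/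
open Complex

noncomputable section

/-- The complexified double layer kernel
`g(z,y) = -(ik/2) H₁⁽¹⁾(k r(z,y)) ((z - y₁, -y₂) ⋅ n(y)) / r(z,y)`,
for a target `(z, 0)` with `z` complex and a source `y = (y₁, y₂) ∈ ℝ²` with
unit normal `n(y)`. -/
def kernelG (Hf : ℂ → ℂ) (n : ℝ × ℝ → ℝ × ℝ) (k : ℝ) (z : ℂ) (y₁ y₂ : ℝ) : ℂ :=
  -(Complex.I * k / 2) * Hf (k * complexDist z y₁ y₂) *
    ((z - (y₁ : ℂ)) * ((n (y₁, y₂)).1 : ℂ) + (-(y₂ : ℂ)) * ((n (y₁, y₂)).2 : ℂ)) /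
    complexDist z y₁ y₂

set_option maxHeartbeats 1000000 in
private lemma complexDist_facts (δ H : ℝ) (hδ : 0 < δ) (hH : 0 < H)
    (z : ℂ) (y₁ y₂ : ℝ) (ha' : δ ≤ z.re - y₁) (hy2 : |y₂| ≤ H) :
    δ ≤ ‖complexDist z y₁ y₂‖ ∧
    z.im - H^2/δ ≤ (complexDist z y₁ y₂).im ∧
    ‖z - (y₁:ℂ)‖ ≤ ‖complexDist z y₁ y₂‖ + H := by
  set w : ℂ := z - (y₁:ℂ) with hw
  set u : ℂ := w^2 + (y₂:ℂ)^2 with hu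
  have ha : δ ≤ w.re := by
    have : w.re = z.re - y₁ := by simp [hw]
    rw [this]; linarith
  have hbw : w.im = z.im := by simp [hw]
  have hure : u.re = w.re^2 - w.im^2 + y₂^2 := by
    simp [hu, pow_two, Complex.add_re, Complex.mul_re]
  have huim : u.im = 2 * w.re * w.im := by
    simp [hu, pow_two, Complex.add_im, Complex.mul_im]; ring
  have key : (w.re^2)^2 ≤ u.re^2 + u.im^2 := by
    rw [hure, huim]
    nlinarith [sq_nonneg (w.im^2 - y₂^2), mul_nonneg (sq_nonneg w.re) (sq_nonneg w.im),
      mul_nonneg (sq_nonneg w.re) (sq_nonneg y₂)]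
  have habs_u : w.re^2 ≤ ‖u‖ := by
    rw [Complex.norm_def, Complex.normSq_apply]
    refine Real.le_sqrt_of_sq_le ?_
    calc (w.re^2)^2 ≤ u.re^2 + u.im^2 := key
      _ = u.re * u.re + u.im * u.im := by ring
  have habs_u' : δ^2 ≤ ‖u‖ := le_trans (by nlinarith) habs_u
  have hu0 : u ≠ 0 := by
    intro h0; rw [h0, norm_zero] at habs_u'; nlinarith
  have hr_def : complexDist z y₁ y₂ = u ^ ((1:ℂ)/2) := rfl
  set r : ℂ := complexDist z y₁ y₂ with hrd
  have habs_r : ‖r‖ = Real.sqrt (‖u‖) := by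
    rw [hr_def, Complex.norm_cpow_of_ne_zero hu0, Real.sqrt_eq_rpow]
    norm_num
  have hr_lb : δ ≤ ‖r‖ := by
    rw [habs_r]
    calc δ = Real.sqrt (δ^2) := (Real.sqrt_sq hδ.le).symm
      _ ≤ _ := Real.sqrt_le_sqrt habs_u'
  have hrpos : 0 < ‖r‖ := lt_of_lt_of_le hδ hr_lb
  have hr0 : r ≠ 0 := by simpa using hrpos.ne'
  have hr_sq : r * r = u := by
    rw [hr_def, ← Complex.cpow_add _ _ hu0]
    norm_num
  have hr_re : 0 ≤ r.re := by
    rw [hr_def, Complex.cpow_def_of_ne_zero hu0, Complex.exp_re]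
    apply mul_nonneg (Real.exp_pos _).le
    apply Real.cos_nonneg_of_mem_Icc
    have h1 := Complex.arg_le_pi u
    have h2 := Complex.neg_pi_lt_arg u
    have him : (Complex.log u * ((1:ℂ)/2)).im = Complex.arg u * (1/2) := by
      simp [Complex.mul_im, Complex.log_im]
    rw [him]; constructor <;> [linarith; linarith]
  clear_value w u r
  have hrw_re : δ ≤ (r + w).re := by
    rw [Complex.add_re]; linarith
  have habs_rw : δ ≤ ‖r + w‖ :=
    le_trans (le_trans hrw_re (le_abs_self _)) (Complex.abs_re_le_norm _)
  have hrw0 : r + w ≠ 0 := by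
    intro h0; rw [h0, norm_zero] at habs_rw; linarith
  have hr_sq' : r * r = w^2 + (y₂:ℂ)^2 := by rw [hr_sq, hu]
  have hkey : (r - w) * (r + w) = (y₂:ℂ)^2 := by linear_combination hr_sq'
  have hsub : ‖r - w‖ ≤ H^2/δ := by
    rw [le_div_iff₀ hδ]
    calc ‖r - w‖ * δ ≤ ‖r - w‖ * ‖r + w‖ := by
          apply mul_le_mul_of_nonneg_left habs_rw (norm_nonneg _)
      _ = y₂^2 := by
          rw [← norm_mul, hkey, ← Complex.ofReal_pow, Complex.norm_real, Real.norm_eq_abs]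
          exact abs_of_nonneg (sq_nonneg _)
      _ ≤ H^2 := by nlinarith [abs_le.1 hy2, abs_nonneg y₂]
  have him_r : z.im - H^2/δ ≤ r.im := by
    have h1 : |(r - w).im| ≤ ‖r - w‖ := Complex.abs_im_le_norm _
    have h2 : (r - w).im = r.im - z.im := by rw [Complex.sub_im, hbw]
    rw [h2] at h1
    have := abs_le.1 h1
    linarith [this.1]
  have h_w_le : ‖w‖ ≤ ‖r‖ + H := by
    have h1 : ‖w‖ ^ 2 = ‖w^2‖ := (norm_pow _ _).symm
    have h2 : ‖w^2‖ ≤ ‖r‖ ^2 + H^2 := by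
      calc ‖w^2‖ = ‖u + (-((y₂:ℂ)^2))‖ := by
            congr 1; rw [hu]; ring
        _ ≤ ‖u‖ + ‖-((y₂:ℂ)^2)‖ := norm_add_le _ _
        _ = ‖r‖ ^ 2 + y₂^2 := by
            rw [norm_neg, ← hr_sq, norm_mul, ← Complex.ofReal_pow, Complex.norm_real, Real.norm_eq_abs,
              _root_.abs_of_nonneg (sq_nonneg y₂)]
            ring
        _ ≤ ‖r‖ ^2 + H^2 := by nlinarith [abs_le.1 hy2, abs_nonneg y₂]
    nlinarith [norm_nonneg w, norm_nonneg r, hH.le]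
  exact ⟨hr_lb, him_r, h_w_le⟩

set_option maxHeartbeats 4000000 in
/-- Kernel estimate for complex targets in the closed first quadrant beyond `L`
and real sources in the perturbed (middle) part of the boundary. -/
theorem kernel_bound_target_complex
    (k L δ H C₀ : ℝ) (hk : 0 < k) (hδ : 0 < δ) (hδL : δ < L) (hH : 0 < H)
    (Hf : ℂ → ℂ)
    (hHf : ∀ w : ℂ, w ≠ 0 →
      ‖Hf w‖ ≤ C₀ * Real.exp (-w.im) *
        (1 / Real.sqrt ‖w‖ + 1 / ‖w‖))
    (n : ℝ × ℝ → ℝ × ℝ) (hn : ∀ y, (n y).1 ^ 2 + (n y).2 ^ 2 = 1) :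
    ∃ C₁ : ℝ, 0 < C₁ ∧ ∀ (z : ℂ) (y₁ y₂ : ℝ),
      L < z.re → 0 ≤ z.im → |y₁| ≤ L - δ → |y₂| ≤ H →
      ‖kernelG Hf n k z y₁ y₂‖ ≤
        C₁ * Real.exp (-k * |z.im|) / Real.sqrt (1 + ‖z‖) := by

  have hC₀ : 0 ≤ C₀ := by
    have h := hHf Complex.I Complex.I_ne_zero
    simp [Complex.norm_I, Complex.I_im, Real.sqrt_one] at h
    nlinarith [Real.exp_pos (-1:ℝ), norm_nonneg (Hf Complex.I)]
  set K : ℝ := (1+L+H)*(δ+1)/δ with hKdef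
  have hK0 : 0 < K := div_pos (by nlinarith) hδ
  set B : ℝ := Real.sqrt K / Real.sqrt k + K / k with hBdef
  have hB0 : 0 < B :=
    add_pos_of_nonneg_of_pos (by positivity) (div_pos hK0 hk)
  set M : ℝ := 1 + 2*H/δ with hMdef
  have hM0 : 0 < M := by positivity
  have hCnn : 0 ≤ k/2*C₀*Real.exp (k*H^2/δ)*B*M :=
    mul_nonneg (mul_nonneg (mul_nonneg (mul_nonneg (by linarith) hC₀)
      (Real.exp_pos _).le) hB0.le) hM0.le
  refine ⟨k/2*C₀*Real.exp (k*H^2/δ)*B*M + 1, by linarith, ?_⟩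
  intro z y₁ y₂ hz1 hz2 hy1 hy2
  set r : ℂ := complexDist z y₁ y₂ with hrd
  obtain ⟨hr_lb, him_r, h_w_le⟩ := complexDist_facts δ H hδ hH z y₁ y₂
    (by have := abs_le.1 hy1; linarith) hy2
  have hrpos : 0 < ‖r‖ := lt_of_lt_of_le hδ hr_lb
  have hr0 : r ≠ 0 := by simpa using hrpos.ne'
  have hz_le : ‖z‖ ≤ ‖r‖ + H + L := by
    calc ‖z‖ = ‖(z - (y₁:ℂ)) + (y₁:ℂ)‖ := by congr 1; ring
      _ ≤ ‖z - (y₁:ℂ)‖ + ‖(y₁:ℂ)‖ := norm_add_le _ _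
      _ ≤ (‖r‖ + H) + (L - δ) := by
          rw [Complex.norm_real, Real.norm_eq_abs]; exact add_le_add h_w_le hy1
      _ ≤ ‖r‖ + H + L := by linarith
  -- S and comparisons
  have hzabs : 0 ≤ ‖z‖ := norm_nonneg z
  set S := Real.sqrt (1 + ‖z‖) with hSdef
  have hS0 : 0 < S := Real.sqrt_pos.2 (by linarith)
  have hKr : 1 + ‖z‖ ≤ K * ‖r‖ := by
    rw [hKdef, div_mul_eq_mul_div, le_div_iff₀ hδ]
    nlinarith [hr_lb, hz_le, hδ.le, hH.le, hδL,
      mul_le_mul_of_nonneg_left hr_lb hδ.le,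
      mul_nonneg (show (0:ℝ) ≤ L+H by linarith)
        (show (0:ℝ) ≤ (δ+1)*‖r‖ - δ by nlinarith [hr_lb, hδ]),
      mul_nonneg hδ.le (show (0:ℝ) ≤ ‖r‖ - δ by linarith)]
  have hsqrtKr : S ≤ Real.sqrt K * Real.sqrt (‖r‖) := by
    rw [hSdef, ← Real.sqrt_mul hK0.le]; exact Real.sqrt_le_sqrt hKr
  have hSle : S ≤ K * ‖r‖ := by
    have h1 : S ≤ 1 + ‖z‖ := by
      rw [hSdef]
      calc Real.sqrt (1 + ‖z‖) ≤ Real.sqrt ((1 + ‖z‖)^2) :=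
            Real.sqrt_le_sqrt (by nlinarith)
        _ = 1 + ‖z‖ := Real.sqrt_sq (by linarith)
    linarith
  -- Hankel bound
  have hkr0 : (k:ℂ) * r ≠ 0 :=
    mul_ne_zero (Complex.ofReal_ne_zero.2 hk.ne') hr0
  have habs_kr : ‖(k:ℂ) * r‖ = k * ‖r‖ := by
    rw [norm_mul, Complex.norm_real, Real.norm_eq_abs, abs_of_pos hk]
  have hkim : ((k:ℂ) * r).im = k * r.im := by
    simp [Complex.mul_im]
  have hHfb := hHf _ hkr0
  rw [habs_kr, hkim] at hHfb
  have hE : Real.exp (-(k * r.im)) ≤ Real.exp (k*H^2/δ) * Real.exp (-k * z.im) := by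
    rw [← Real.exp_add]
    apply Real.exp_le_exp.2
    have h := mul_le_mul_of_nonneg_left him_r hk.le
    have h2 : k * (z.im - H^2/δ) = k * z.im - k*H^2/δ := by ring
    rw [h2] at h
    linarith
  have hF1 : 1 / Real.sqrt (k * ‖r‖) ≤ (Real.sqrt K / Real.sqrt k) / S := by
    rw [Real.sqrt_mul hk.le, div_div,
      div_le_div_iff₀ (mul_pos (Real.sqrt_pos.2 hk) (Real.sqrt_pos.2 hrpos))
        (mul_pos (Real.sqrt_pos.2 hk) hS0)]
    nlinarith [mul_le_mul_of_nonneg_left hsqrtKr (Real.sqrt_nonneg k)]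
  have hF2 : 1 / (k * ‖r‖) ≤ (K / k) / S := by
    rw [div_div, div_le_div_iff₀ (mul_pos hk hrpos) (mul_pos hk hS0)]
    nlinarith [mul_le_mul_of_nonneg_left hSle hk.le]
  have hF : 1 / Real.sqrt (k * ‖r‖) + 1 / (k * ‖r‖) ≤ B / S := by
    rw [hBdef, add_div]; exact add_le_add hF1 hF2
  have hFnn : 0 ≤ 1 / Real.sqrt (k * ‖r‖) + 1 / (k * ‖r‖) :=
    add_nonneg (by positivity) (le_of_lt (by positivity))
  have hA : ‖Hf ((k:ℂ)*r)‖ ≤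
      C₀ * (Real.exp (k*H^2/δ) * Real.exp (-k*z.im)) * (B/S) := by
    refine le_trans hHfb ?_
    exact mul_le_mul (mul_le_mul_of_nonneg_left hE hC₀) hF hFnn
      (mul_nonneg hC₀ (by positivity))
  -- dot product
  set d : ℂ := (z - (y₁:ℂ)) * ((n (y₁,y₂)).1 : ℂ) + (-(y₂:ℂ)) * ((n (y₁,y₂)).2 : ℂ) with hdd
  have hn1 : |(n (y₁,y₂)).1| ≤ 1 := by
    rw [← Real.sqrt_one, ← Real.sqrt_sq_eq_abs]
    apply Real.sqrt_le_sqrt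
    nlinarith [hn (y₁,y₂), sq_nonneg (n (y₁,y₂)).2]
  have hn2 : |(n (y₁,y₂)).2| ≤ 1 := by
    rw [← Real.sqrt_one, ← Real.sqrt_sq_eq_abs]
    apply Real.sqrt_le_sqrt
    nlinarith [hn (y₁,y₂), sq_nonneg (n (y₁,y₂)).1]
  have hdot : ‖d‖ ≤ ‖r‖ + 2*H := by
    calc ‖d‖ ≤ ‖(z - (y₁:ℂ)) * ((n (y₁,y₂)).1 : ℂ)‖ +
          ‖(-(y₂:ℂ)) * ((n (y₁,y₂)).2 : ℂ)‖ := norm_add_le _ _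
      _ = ‖z - (y₁:ℂ)‖ * |(n (y₁,y₂)).1| + |y₂| * |(n (y₁,y₂)).2| := by
          rw [norm_mul, norm_mul, norm_neg, Complex.norm_real,
            Complex.norm_real, Complex.norm_real, Real.norm_eq_abs, Real.norm_eq_abs, Real.norm_eq_abs]
      _ ≤ (‖r‖ + H) * 1 + H * 1 := by
          apply add_le_add
          · exact mul_le_mul h_w_le hn1 (abs_nonneg _) (by positivity)
          · exact mul_le_mul hy2 hn2 (abs_nonneg _) hH.le
      _ = ‖r‖ + 2*H := by ring
  have hDM : ‖d‖ / ‖r‖ ≤ M := by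
    rw [hMdef, div_le_iff₀ hrpos]
    have h2H : 2*H ≤ 2*H/δ * ‖r‖ := by
      rw [div_mul_eq_mul_div, le_div_iff₀ hδ]
      nlinarith [hr_lb, hH.le]
    nlinarith [hdot, h2H]
  -- assemble
  have hker : kernelG Hf n k z y₁ y₂ = -(Complex.I * (k:ℂ) / 2) * Hf ((k:ℂ)*r) * d / r := by
    rw [hrd, hdd]; rfl
  have habs_coef : ‖-(Complex.I * (k:ℂ) / 2)‖ = k/2 := by
    rw [norm_neg, norm_div, norm_mul, Complex.norm_I, Complex.norm_real, Real.norm_eq_abs,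
      abs_of_pos hk, Complex.norm_two, one_mul]
  rw [_root_.abs_of_nonneg hz2]
  calc ‖kernelG Hf n k z y₁ y₂‖
      = k/2 * ‖Hf ((k:ℂ)*r)‖ * (‖d‖ / ‖r‖) := by
        rw [hker, norm_div, norm_mul, norm_mul, habs_coef]; ring
    _ ≤ k/2 * (C₀ * (Real.exp (k*H^2/δ) * Real.exp (-k*z.im)) * (B/S)) * M := by
        apply mul_le_mul (mul_le_mul_of_nonneg_left hA (by linarith : (0:ℝ) ≤ k/2)) hDM
          (div_nonneg (norm_nonneg d) (norm_nonneg r))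
        exact mul_nonneg (by linarith)
          (mul_nonneg (mul_nonneg hC₀ (by positivity)) (div_nonneg hB0.le hS0.le))
    _ = (k/2*C₀*Real.exp (k*H^2/δ)*B*M) * Real.exp (-k*z.im) / S := by ring
    _ ≤ (k/2*C₀*Real.exp (k*H^2/δ)*B*M + 1) * Real.exp (-k*z.im) / S := by
        have hES : 0 ≤ Real.exp (-k*z.im) / S :=
          div_nonneg (Real.exp_pos _).le hS0.le
        rw [div_le_div_iff₀ hS0 hS0]
        nlinarith [hES, hS0, (Real.exp_pos (-k*z.im)).le]

end
end

section
/- Let (f_n) be a sequence of continuous functions on a set Γ_ℂ ⊆ ℂ × ℝ satisfying the uniform bound sup_n sup_{x} e^{k|Im x₁|}(1+|x|)^{1/2}|f_n(x)| < ∞ for some k > 0, and suppose the family (e^{k|Im x₁|}(1+|x|)^α f_n) is equicontinuous on Γ_ℂ for some 0 < α < 1/2. Then for any 0 < β ≤ k, (f_n) has a subsequence that is Cauchy in the norm ‖g‖_{α,β} = sup_x e^{β|Im x₁|}(1+|x|)^α |g(x)|. -/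
open Complex Filter
open Topology

noncomputable section

/-- Compactness (Arzelà–Ascoli + diagonal argument) in the weighted spaces:
a uniformly bounded sequence in `C^{1/2,k}` whose weighted versions are
equicontinuous has a subsequence which is Cauchy in the `C^{α,β}` norm, for
any `0 < α < 1/2` and `0 < β ≤ k`. -/
theorem weighted_arzela_ascoli
    (k α β : ℝ) (hk : 0 < k) (hα : 0 < α) (hα' : α < 1 / 2)
    (hβ : 0 < β) (hβk : β ≤ k)
    (Γ : Set (ℂ × ℝ)) (hΓ : IsClosed Γ)
    (hcomp : ∀ R : ℝ, IsCompact {x ∈ Γ | ‖x‖ ≤ R})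
    (f : ℕ → (ℂ × ℝ) → ℂ)
    (hcont : ∀ n, ContinuousOn (f n) Γ)
    (hbd : ∃ M : ℝ, ∀ n, ∀ x ∈ Γ,
      Real.exp (k * |x.1.im|) * (1 + ‖x‖) ^ ((1 : ℝ) / 2) * ‖f n x‖ ≤ M)
    (hequi : EquicontinuousOn
      (fun n (x : ℂ × ℝ) =>
        ((Real.exp (k * |x.1.im|) * (1 + ‖x‖) ^ α : ℝ) : ℂ) * f n x) Γ) :
    ∃ φ : ℕ → ℕ, StrictMono φ ∧
      ∀ ε > 0, ∃ N, ∀ m ≥ N, ∀ n ≥ N, ∀ x ∈ Γ,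
        Real.exp (β * |x.1.im|) * (1 + ‖x‖) ^ α * ‖f (φ m) x - f (φ n) x‖ ≤ ε := by
  classical
  obtain ⟨M, hM⟩ := hbd
  set M' : ℝ := max M 0 with hM'def
  have hM'0 : 0 ≤ M' := le_max_right _ _
  have hMM' : ∀ n, ∀ x ∈ Γ,
      Real.exp (k * |x.1.im|) * (1 + ‖x‖) ^ ((1 : ℝ) / 2) * ‖f n x‖ ≤ M' :=
    fun n x hx => (hM n x hx).trans (le_max_left _ _)
  set g : ℕ → (ℂ × ℝ) → ℂ := fun n (x : ℂ × ℝ) =>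
    ((Real.exp (k * |x.1.im|) * (1 + ‖x‖) ^ α : ℝ) : ℂ) * f n x with hg
  have hbase : ∀ x : ℂ × ℝ, (1 : ℝ) ≤ 1 + ‖x‖ :=
    fun x => le_add_of_nonneg_right (norm_nonneg x)
  have hbasepos : ∀ x : ℂ × ℝ, (0 : ℝ) < 1 + ‖x‖ :=
    fun x => lt_of_lt_of_le one_pos (hbase x)
  have hgnorm : ∀ n x, ‖g n x‖ = Real.exp (k * |x.1.im|) * (1 + ‖x‖) ^ α * ‖f n x‖ := by
    intro n x
    rw [hg]
    simp only [norm_mul, Complex.norm_real, Real.norm_eq_abs]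
    rw [abs_of_pos (Real.exp_pos _), _root_.abs_of_nonneg (by positivity : (0:ℝ) ≤ (1 + ‖x‖) ^ α)]
  have hgbd : ∀ n, ∀ x ∈ Γ, ‖g n x‖ ≤ M' := by
    intro n x hx
    rw [hgnorm]
    calc Real.exp (k * |x.1.im|) * (1 + ‖x‖) ^ α * ‖f n x‖
        ≤ Real.exp (k * |x.1.im|) * (1 + ‖x‖) ^ ((1 : ℝ) / 2) * ‖f n x‖ := by
          exact mul_le_mul_of_nonneg_right (mul_le_mul_of_nonneg_left
            (Real.rpow_le_rpow_of_exponent_le (hbase x) hα'.le)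
            (Real.exp_pos _).le) (norm_nonneg _)
      _ ≤ M' := hMM' n x hx
  have hA : ∀ m n : ℕ, ∀ x ∈ Γ,
      Real.exp (β * |x.1.im|) * (1 + ‖x‖) ^ α * ‖f m x - f n x‖ ≤ ‖g m x - g n x‖ := by
    intro m n x hx
    have key : g m x - g n x
        = ((Real.exp (k * |x.1.im|) * (1 + ‖x‖) ^ α : ℝ) : ℂ) * (f m x - f n x) := by
      rw [hg]; ring
    rw [key, norm_mul, Complex.norm_real, Real.norm_eq_abs,
      _root_.abs_of_nonneg (a := Real.exp (k * |x.1.im|) * (1 + ‖x‖) ^ α) (by positivity)]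
    exact mul_le_mul_of_nonneg_right (mul_le_mul_of_nonneg_right
      (Real.exp_le_exp.2 (mul_le_mul_of_nonneg_right hβk (abs_nonneg _)))
      (by positivity)) (norm_nonneg _)
  have hB : ∀ R : ℝ, 0 ≤ R → ∀ m n : ℕ, ∀ x ∈ Γ, R ≤ ‖x‖ →
      Real.exp (β * |x.1.im|) * (1 + ‖x‖) ^ α * ‖f m x - f n x‖
        ≤ 2 * M' * (1 + R) ^ (α - 1 / 2) := by
    intro R hR0 m n x hx hRx
    have h1R : (0 : ℝ) < 1 + R := by linarith
    have hc : (1 + ‖x‖) ^ (α - 1 / 2) ≤ (1 + R) ^ (α - 1 / 2) :=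
      Real.rpow_le_rpow_of_nonpos h1R (by linarith) (by linarith)
    have hsplit : (1 + ‖x‖) ^ α
        = (1 + ‖x‖) ^ (α - 1 / 2) * (1 + ‖x‖) ^ ((1 : ℝ) / 2) := by
      rw [← Real.rpow_add (hbasepos x)]; ring_nf
    calc Real.exp (β * |x.1.im|) * (1 + ‖x‖) ^ α * ‖f m x - f n x‖
        ≤ Real.exp (k * |x.1.im|) * (1 + ‖x‖) ^ α * (‖f m x‖ + ‖f n x‖) := by
          exact mul_le_mul (mul_le_mul_of_nonneg_right
            (Real.exp_le_exp.2 (mul_le_mul_of_nonneg_right hβk (abs_nonneg _)))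
            (by positivity)) (norm_sub_le _ _) (norm_nonneg _) (by positivity)
      _ = (1 + ‖x‖) ^ (α - 1 / 2)
            * (Real.exp (k * |x.1.im|) * (1 + ‖x‖) ^ ((1 : ℝ) / 2) * ‖f m x‖)
          + (1 + ‖x‖) ^ (α - 1 / 2)
            * (Real.exp (k * |x.1.im|) * (1 + ‖x‖) ^ ((1 : ℝ) / 2) * ‖f n x‖) := by
          rw [hsplit]; ring
      _ ≤ (1 + R) ^ (α - 1 / 2) * M' + (1 + R) ^ (α - 1 / 2) * M' := by
          have hE1 : (0:ℝ) ≤ Real.exp (k * |x.1.im|) * (1 + ‖x‖) ^ ((1 : ℝ) / 2) * ‖f m x‖ := by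
            positivity
          have hE2 : (0:ℝ) ≤ Real.exp (k * |x.1.im|) * (1 + ‖x‖) ^ ((1 : ℝ) / 2) * ‖f n x‖ := by
            positivity
          exact add_le_add
            (mul_le_mul hc (hMM' m x hx) hE1 (by positivity))
            (mul_le_mul hc (hMM' n x hx) hE2 (by positivity))
      _ = 2 * M' * (1 + R) ^ (α - 1 / 2) := by ring
  rcases Γ.eq_empty_or_nonempty with hΓe | ⟨x₀, hx₀⟩
  · refine ⟨id, strictMono_id, fun ε hε => ⟨0, fun m _ n _ x hx => ?_⟩⟩
    rw [hΓe] at hx; exact absurd hx (Set.notMem_empty x)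
  haveI : Nonempty ↥Γ := ⟨⟨x₀, hx₀⟩⟩
  set d : ℕ → ↥Γ := TopologicalSpace.denseSeq ↥Γ with hd_def
  have hd : DenseRange d := TopologicalSpace.denseRange_denseSeq ↥Γ
  -- extract a subsequence converging pointwise on the dense sequence
  set u : ℕ → ℕ → ℂ := fun n i => g n (d i) with hu_def
  have hu : ∀ n, u n ∈ Set.pi Set.univ (fun _ : ℕ => Metric.closedBall (0 : ℂ) M') := by
    intro n i _
    simpa [Metric.mem_closedBall, dist_zero_right] using hgbd n (d i) (d i).2
  obtain ⟨L, -, φ, hφ, hconv⟩ :=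
    (isCompact_univ_pi fun _ : ℕ => isCompact_closedBall (0 : ℂ) M').tendsto_subseq hu
  have hcau : ∀ i : ℕ, CauchySeq (fun n => g (φ n) (d i)) := by
    intro i
    have : Tendsto (fun n => u (φ n) i) atTop (𝓝 (L i)) :=
      ((continuous_apply i).continuousAt.tendsto).comp hconv
    exact this.cauchySeq
  refine ⟨φ, hφ, ?_⟩
  intro ε hε
  have hε5 : 0 < ε / 5 := by linarith
  obtain ⟨R, hR0, hRε⟩ : ∃ R : ℝ, 0 ≤ R ∧ 2 * M' * (1 + R) ^ (α - 1 / 2) < ε := by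
    have h1 : Tendsto (fun R : ℝ => (1 + R) ^ (α - 1 / 2)) atTop (𝓝 0) := by
      have hy : (0 : ℝ) < 1 / 2 - α := by linarith
      have := (tendsto_rpow_neg_atTop hy).comp
        (tendsto_atTop_add_const_left atTop (1 : ℝ) tendsto_id)
      simpa [Function.comp_def, neg_sub] using this
    have h2 : Tendsto (fun R : ℝ => 2 * M' * (1 + R) ^ (α - 1 / 2)) atTop (𝓝 0) := by
      simpa using h1.const_mul (2 * M')
    obtain ⟨R, hlt, hge⟩ := ((h2.eventually (gt_mem_nhds hε)).and
      (eventually_ge_atTop (0 : ℝ))).exists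
    exact ⟨R, hge, hlt⟩
  set K : Set (ℂ × ℝ) := {x ∈ Γ | ‖x‖ ≤ R} with hK_def
  have hOex : ∀ x ∈ K, ∃ O : Set (ℂ × ℝ), IsOpen O ∧ x ∈ O ∧
      ∀ y ∈ O ∩ Γ, ∀ i, dist (g i x) (g i y) < ε / 5 := by
    intro x hx
    have := hequi x hx.1 _ (Metric.dist_mem_uniformity hε5)
    obtain ⟨O, hOopen, hxO, hsub⟩ := mem_nhdsWithin.mp this
    refine ⟨O, hOopen, hxO, fun y hy i => ?_⟩
    have := hsub ⟨hy.1, hy.2⟩ i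
    exact this
  choose! O hOopen hxO hOprop using hOex
  obtain ⟨t, htK, htcover⟩ := (hcomp R).elim_nhds_subcover O
    (fun x hx => (hOopen x hx).mem_nhds (hxO x hx))
  have hdense : ∀ j ∈ t, ∃ i : ℕ, (d i : ℂ × ℝ) ∈ O j := by
    intro j hj
    have hjK := htK j hj
    have hne : (Subtype.val ⁻¹' O j : Set ↥Γ).Nonempty := ⟨⟨j, hjK.1⟩, hxO j hjK⟩
    have hop : IsOpen (Subtype.val ⁻¹' O j : Set ↥Γ) :=
      (hOopen j hjK).preimage continuous_subtype_val
    exact hd.exists_mem_open hop hne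
  choose! idx hidx using hdense
  have hNex : ∀ j ∈ t, ∃ N : ℕ, ∀ m ≥ N, ∀ n ≥ N,
      dist (g (φ m) (d (idx j))) (g (φ n) (d (idx j))) < ε / 5 :=
    fun j _ => Metric.cauchySeq_iff.mp (hcau (idx j)) (ε / 5) hε5
  choose! Nf hNf using hNex
  refine ⟨t.sup Nf, ?_⟩
  intro m hm n hn x hx
  by_cases hxR : ‖x‖ ≤ R
  · have hxK : x ∈ K := ⟨hx, hxR⟩
    obtain ⟨j, hjt, hxOj⟩ := Set.mem_iUnion₂.mp (htcover hxK)
    have hjK := htK j hjt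
    set y : ℂ × ℝ := (d (idx j) : ℂ × ℝ) with hy_def
    have hyΓ : y ∈ Γ := (d (idx j)).2
    have hyO : y ∈ O j := hidx j hjt
    have h1m : dist (g (φ m) j) (g (φ m) x) < ε / 5 := hOprop j hjK x ⟨hxOj, hx⟩ _
    have h1n : dist (g (φ n) j) (g (φ n) x) < ε / 5 := hOprop j hjK x ⟨hxOj, hx⟩ _
    have h2m : dist (g (φ m) j) (g (φ m) y) < ε / 5 := hOprop j hjK y ⟨hyO, hyΓ⟩ _
    have h2n : dist (g (φ n) j) (g (φ n) y) < ε / 5 := hOprop j hjK y ⟨hyO, hyΓ⟩ _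
    have h3 : dist (g (φ m) y) (g (φ n) y) < ε / 5 :=
      hNf j hjt m (le_trans (Finset.le_sup hjt) hm) n (le_trans (Finset.le_sup hjt) hn)
    have tri1 : dist (g (φ m) x) (g (φ n) y)
        ≤ dist (g (φ m) x) (g (φ m) j) + dist (g (φ m) j) (g (φ m) y)
          + dist (g (φ m) y) (g (φ n) y) := dist_triangle4 _ _ _ _
    have tri2 : dist (g (φ m) x) (g (φ n) x)
        ≤ dist (g (φ m) x) (g (φ n) y) + dist (g (φ n) y) (g (φ n) j)
          + dist (g (φ n) j) (g (φ n) x) := dist_triangle4 _ _ _ _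
    have hcm : dist (g (φ m) x) (g (φ m) j) = dist (g (φ m) j) (g (φ m) x) := dist_comm _ _
    have hcn : dist (g (φ n) y) (g (φ n) j) = dist (g (φ n) j) (g (φ n) y) := dist_comm _ _
    have hdlt : dist (g (φ m) x) (g (φ n) x) < ε := by
      rw [hcm] at tri1; rw [hcn] at tri2; linarith
    have := hA (φ m) (φ n) x hx
    rw [← dist_eq_norm (g (φ m) x)] at this
    exact this.trans hdlt.le
  · push_neg at hxR
    exact (hB R hR0 (φ m) (φ n) x hx hxR.le).trans hRε.le

end
end
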